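/- Let V ∈ ℝ^{n×r} with VᵀV = I_r, let Q ∈ ℝ^{r×r} be symmetric idempotent, and set W := VQ. Let à ∈ ℝ^{m×n} satisfy ÃW = 0 and Ã(:,j) = 0 for every index j with W(j,:) = 0. For each j with W(j,:) ≠ 0 define Π̃_j := I_n − e_j (W(j,:) Wᵀ)/‖W(j,:)‖₂². Then Σ_{j=1}^n c_j = (‖W‖_F² + 1)·‖Ã‖_F², where c_j := ‖W(j,:)‖₂² · ‖Ã Π̃_j‖_F² when W(j,:) ≠ 0 and c_j := 0 when W(j,:) = 0. (Dividing by ‖W‖_F², this is the single-step conditional expectation identity E[‖Ã_k‖_F² | j_1,…,j_{k−1}] = ((r−k+2)/(r−k+1))‖Ã_{k−1}‖_F² in the proof of Theorem 2.3.) -/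

import Mathlib

open Matrix BigOperators

/-- One step of the ARP recursion: project out the `i`-th row of `W`
(convention: leave `W` unchanged if that row is zero). -/
noncomputable def arpStep {n r : ℕ} (W : Matrix (Fin n) (Fin r) ℝ) (i : Fin n) :
    Matrix (Fin n) (Fin r) ℝ :=
  if W i = 0 then W
  else W * (1 - (∑ l, (W i l) ^ 2)⁻¹ • Matrix.of fun a b => W i a * W i b)

/-- The ARP iterates `V_k`. -/
noncomputable def arpIter {n r : ℕ} (V : Matrix (Fin n) (Fin r) ℝ) (j : Fin r → Fin n) :
    ℕ → Matrix (Fin n) (Fin r) ℝ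
  | 0 => V
  | k + 1 => if h : k < r then arpStep (arpIter V j k) (j ⟨k, h⟩) else arpIter V j k

/-- The ARP weight `w(j) = ∏_{k=1}^r ‖v_k‖²/(r-k+1)`. -/
noncomputable def arpWeight {n r : ℕ} (V : Matrix (Fin n) (Fin r) ℝ) (j : Fin r → Fin n) : ℝ :=
  ∏ k : Fin r, (∑ l, (arpIter V j k.val (j k) l) ^ 2) / ((r : ℝ) - (k.val : ℝ))

/-- The matrix `E_J` whose `k`-th column is the `j_k`-th standard basis vector of ℝⁿ. -/
def EJ {n k : ℕ} (j : Fin k → Fin n) : Matrix (Fin n) (Fin k) ℝ :=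
  Matrix.of fun i l => if i = j l then 1 else 0

/-- Squared Frobenius norm. -/
def frobSq {m n : ℕ} (A : Matrix (Fin m) (Fin n) ℝ) : ℝ := ∑ i, ∑ j, (A i j) ^ 2

/-- the single-step conditional expectation identity:
`Σ_j ‖W(j,:)‖₂² ‖Ã Π̃_j‖_F² = (‖W‖_F² + 1) ‖Ã‖_F²` (a summand with `W(j,:) = 0`
vanishes since its weight `‖W(j,:)‖₂²` is zero). -/
theorem one_step_expectation {m n r : ℕ}
    (V : Matrix (Fin n) (Fin r) ℝ) (hV : Vᵀ * V = 1)
    (Q : Matrix (Fin r) (Fin r) ℝ) (hQsym : Qᵀ = Q) (hQidem : Q * Q = Q)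
    (W : Matrix (Fin n) (Fin r) ℝ) (hW : W = V * Q)
    (Atil : Matrix (Fin m) (Fin n) ℝ) (hAW : Atil * W = 0)
    (hcols : ∀ jj : Fin n, W jj = 0 → ∀ i : Fin m, Atil i jj = 0) :
    ∑ jj : Fin n, (∑ l, (W jj l) ^ 2) *
        frobSq (Atil *
          ((1 : Matrix (Fin n) (Fin n) ℝ) -
            (∑ l, (W jj l) ^ 2)⁻¹ •
              Matrix.of (fun a b => (if a = jj then (1 : ℝ) else 0) * ∑ l, W jj l * W b l))) =
      (frobSq W + 1) * frobSq Atil := by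
  have hWtW : Wᵀ * W = Q := by
    rw [hW, Matrix.transpose_mul, Matrix.mul_assoc, ← Matrix.mul_assoc Vᵀ V Q, hV,
      Matrix.one_mul, hQsym, hQidem]
  have hWQ : W * Q = W := by rw [hW, Matrix.mul_assoc, hQidem]
  have hWWt : (W * Wᵀ) * (W * Wᵀ) = W * Wᵀ := by
    rw [Matrix.mul_assoc, ← Matrix.mul_assoc Wᵀ W Wᵀ, hWtW, ← Matrix.mul_assoc, hWQ]
  have hcross : ∀ (i : Fin m) (jj : Fin n), ∑ b, Atil i b * ∑ l, W jj l * W b l = 0 := by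
    intro i jj
    have h0 : ∀ l, ∑ b, Atil i b * W b l = 0 := by
      intro l
      have := congrFun (congrFun hAW i) l
      simpa [Matrix.mul_apply] using this
    calc ∑ b, Atil i b * ∑ l, W jj l * W b l
        = ∑ b, ∑ l, W jj l * (Atil i b * W b l) := by
          refine Finset.sum_congr rfl fun b _ => ?_
          rw [Finset.mul_sum]
          exact Finset.sum_congr rfl fun l _ => by ring
      _ = ∑ l, W jj l * ∑ b, Atil i b * W b l := by
          rw [Finset.sum_comm]
          exact Finset.sum_congr rfl fun l _ => by rw [Finset.mul_sum]
      _ = 0 := by simp [h0]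
  have hquad : ∀ jj : Fin n, ∑ b, (∑ l, W jj l * W b l) ^ 2 = ∑ l, (W jj l) ^ 2 := by
    intro jj
    have h := congrFun (congrFun hWWt jj) jj
    simp only [Matrix.mul_apply, Matrix.transpose_apply] at h
    calc ∑ b, (∑ l, W jj l * W b l) ^ 2
        = ∑ b, (∑ l, W jj l * W b l) * (∑ l, W b l * W jj l) := by
          refine Finset.sum_congr rfl fun b _ => ?_
          rw [pow_two]
          congr 1
          exact Finset.sum_congr rfl fun l _ => by ring
      _ = ∑ l, W jj l * W jj l := h
      _ = ∑ l, (W jj l) ^ 2 := by simp [pow_two]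
  have key : ∀ jj : Fin n,
      (∑ l, (W jj l) ^ 2) *
        frobSq (Atil *
          ((1 : Matrix (Fin n) (Fin n) ℝ) -
            (∑ l, (W jj l) ^ 2)⁻¹ •
              Matrix.of (fun a b => (if a = jj then (1 : ℝ) else 0) * ∑ l, W jj l * W b l)))
      = (∑ l, (W jj l) ^ 2) * frobSq Atil + ∑ i, (Atil i jj) ^ 2 := by
    intro jj
    by_cases hz : W jj = 0
    · have hs : (∑ l, (W jj l) ^ 2) = 0 := by simp [hz]
      simp [hs, hcols jj hz]
    · have hs : (0 : ℝ) < ∑ l, (W jj l) ^ 2 := by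
        have hne : ∃ l, W jj l ≠ 0 := by
          by_contra hc
          push_neg at hc
          exact hz (funext hc)
        obtain ⟨l0, hl0⟩ := hne
        refine Finset.sum_pos' (fun l _ => sq_nonneg _) ⟨l0, Finset.mem_univ _, ?_⟩
        positivity
      set s : ℝ := ∑ l, (W jj l) ^ 2 with hsdef
      have hsne : s ≠ 0 := ne_of_gt hs
      have hentry : ∀ (i : Fin m) (b : Fin n),
          (Atil *
            ((1 : Matrix (Fin n) (Fin n) ℝ) -
              s⁻¹ • Matrix.of (fun a b => (if a = jj then (1 : ℝ) else 0) * ∑ l, W jj l * W b l))) i b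
          = Atil i b - s⁻¹ * (Atil i jj * ∑ l, W jj l * W b l) := by
        intro i b
        rw [Matrix.mul_sub, Matrix.mul_one, Matrix.mul_smul, Matrix.sub_apply, Matrix.smul_apply]
        congr 1
        rw [Matrix.mul_apply]
        simp only [Matrix.of_apply, smul_eq_mul]
        rw [Finset.sum_congr rfl (fun a _ => by
          rw [show Atil i a * ((if a = jj then (1:ℝ) else 0) * ∑ l, W jj l * W b l)
              = (if a = jj then Atil i a * ∑ l, W jj l * W b l else 0) from by
            split <;> ring])]
        rw [Finset.sum_ite_eq' Finset.univ jj (fun a => Atil i a * ∑ l, W jj l * W b l)]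
        simp
      have hrow : ∀ i : Fin m,
          ∑ b, (Atil i b - s⁻¹ * (Atil i jj * ∑ l, W jj l * W b l)) ^ 2
          = (∑ b, (Atil i b) ^ 2) + s⁻¹ * (Atil i jj) ^ 2 := by
        intro i
        have expand : ∀ b : Fin n,
            (Atil i b - s⁻¹ * (Atil i jj * ∑ l, W jj l * W b l)) ^ 2
            = (Atil i b) ^ 2
              - (2 * s⁻¹ * Atil i jj) * (Atil i b * ∑ l, W jj l * W b l)
              + (s⁻¹ ^ 2 * (Atil i jj) ^ 2) * (∑ l, W jj l * W b l) ^ 2 := fun b => by ring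
        simp_rw [expand]
        rw [Finset.sum_add_distrib, Finset.sum_sub_distrib, ← Finset.mul_sum, ← Finset.mul_sum,
          hcross i jj, hquad jj]
        rw [mul_zero, sub_zero, ← hsdef]
        field_simp
      unfold frobSq
      rw [Finset.sum_congr rfl (fun i _ => by
        rw [Finset.sum_congr rfl (fun b _ => by rw [hentry i b]), hrow i])]
      rw [Finset.sum_add_distrib, ← Finset.mul_sum, mul_add]
      congr 1
      rw [← mul_assoc, mul_inv_cancel₀ hsne, one_mul]
  rw [Finset.sum_congr rfl (fun jj _ => key jj), Finset.sum_add_distrib, ← Finset.sum_mul]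
  have hfW : frobSq W = ∑ jj : Fin n, ∑ l, (W jj l) ^ 2 := rfl
  have h1 : (∑ jj : Fin n, ∑ i : Fin m, (Atil i jj) ^ 2) = frobSq Atil := Finset.sum_comm
  rw [h1, ← hfW]
  ring
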